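/- Let A and B be real symmetric positive definite n×n matrices with A ⪯ B (Loewner order) and det(B) ≤ θ · det(A) for some θ ≥ 1. Then B ⪯ θ · A; equivalently, ‖A^{-1/2} B A^{-1/2}‖₂ ≤ θ. -/

import Mathlib

open Matrix MeasureTheory ProbabilityTheory Filter

/-- Frobenius norm of a real matrix. -/
noncomputable def frob {α β : Type*} [Fintype α] [Fintype β] (A : Matrix α β ℝ) : ℝ :=
  Real.sqrt (∑ i, ∑ j, (A i j) ^ 2)

/-- Spectral norm (largest singular value) of a real matrix. -/
noncomputable def spec {α β : Type*} [Fintype α] [Fintype β] [DecidableEq β]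
    (A : Matrix α β ℝ) : ℝ :=
  ‖LinearMap.toContinuousLinearMap (Matrix.toEuclideanLin A)‖

/-- The positive semidefinite square root of a positive semidefinite real matrix
(junk value `0` if the matrix is not positive semidefinite). -/
noncomputable def msqrt {α : Type*} [Fintype α] [DecidableEq α]
    (M : Matrix α α ℝ) : Matrix α α ℝ :=
  open scoped Classical in
  if h : M.PosSemidef then
    h.1.eigenvectorUnitary.1 * diagonal (Real.sqrt ∘ h.1.eigenvalues) *
      (star h.1.eigenvectorUnitary : Matrix α α ℝ)
  else 0

/-- Euclidean norm of a real vector. -/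
noncomputable def vnorm {α : Type*} [Fintype α] (v : α → ℝ) : ℝ :=
  Real.sqrt (∑ i, (v i) ^ 2)

lemma conj_sub_diag {n : ℕ} (U : Matrix (Fin n) (Fin n) ℝ) (hU : U * star U = 1)
    (c : ℝ) (d : Fin n → ℝ) :
    c • (1 : Matrix (Fin n) (Fin n) ℝ) - U * diagonal d * star U
      = U * diagonal (fun i => c - d i) * star U := by
  have h1 : (diagonal (fun i => c - d i) : Matrix (Fin n) (Fin n) ℝ)
      = c • 1 - diagonal d := by
    ext i j
    by_cases h : i = j <;>
      simp [Matrix.diagonal_apply, Matrix.one_apply, h, Matrix.smul_apply]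
  rw [h1, Matrix.mul_sub, Matrix.sub_mul, Matrix.mul_smul, Matrix.mul_one, Matrix.smul_mul, hU]

lemma one_le_eigen {n : ℕ} {M : Matrix (Fin n) (Fin n) ℝ} (hM : M.IsHermitian)
    (hpsd : (M - 1).PosSemidef) (i : Fin n) : 1 ≤ hM.eigenvalues i := by
  set v : Fin n → ℝ := ⇑(hM.eigenvectorBasis i) with hv
  have hvv : v ⬝ᵥ v = 1 := by
    have hn : ‖hM.eigenvectorBasis i‖ = 1 := hM.eigenvectorBasis.orthonormal.1 i
    have h2 : ‖hM.eigenvectorBasis i‖ = Real.sqrt (∑ j, ‖hM.eigenvectorBasis i j‖ ^ 2) :=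
      EuclideanSpace.norm_eq _
    have h3 : ∑ j, (v j) ^ 2 = 1 := by
      have := h2.symm.trans hn
      have h5 : ∑ j, ‖hM.eigenvectorBasis i j‖ ^ 2 = 1 := Real.sqrt_eq_one.mp this
      simpa [Real.norm_eq_abs, sq_abs] using h5
    simp [dotProduct, ← sq, h3]
  have key := hpsd.dotProduct_mulVec_nonneg v
  have hmv : M *ᵥ v = hM.eigenvalues i • v := hM.mulVec_eigenvectorBasis i
  have : (M - 1) *ᵥ v = (hM.eigenvalues i - 1) • v := by
    rw [sub_mulVec, hmv, one_mulVec, sub_smul, one_smul]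
  rw [this] at key
  have : (0:ℝ) ≤ (hM.eigenvalues i - 1) * (v ⬝ᵥ v) := by
    simpa [dotProduct_smul, smul_eq_mul, dotProduct_comm] using key
  rw [hvv, mul_one] at this
  linarith

theorem loewner_from_det_ratio {n : ℕ} (A B : Matrix (Fin n) (Fin n) ℝ) (θ : ℝ)
    (hA : A.PosDef) (hB : B.PosDef) (hθ : 1 ≤ θ)
    (hAB : (B - A).PosSemidef) (hdet : B.det ≤ θ * A.det) :
    (θ • A - B).PosSemidef ∧ spec ((msqrt A)⁻¹ * B * (msqrt A)⁻¹) ≤ θ := by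
  classical
  have hApsd := hA.posSemidef
  set UA : Matrix (Fin n) (Fin n) ℝ := (hApsd.1.eigenvectorUnitary : Matrix (Fin n) (Fin n) ℝ)
    with hUAdef
  have hUA' : star UA * UA = 1 := (mem_unitaryGroup_iff').mp hApsd.1.eigenvectorUnitary.2
  have hAspec : A = UA * diagonal hApsd.1.eigenvalues * star UA := by
    have := hApsd.1.spectral_theorem
    simpa using this
  set S : Matrix (Fin n) (Fin n) ℝ :=
    UA * diagonal (Real.sqrt ∘ hApsd.1.eigenvalues) * star UA with hSdef
  have hmsqrt : msqrt A = S := by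
    rw [msqrt, dif_pos hApsd]
  have hSS : S * S = A := by
    rw [hSdef]
    calc UA * diagonal (Real.sqrt ∘ hApsd.1.eigenvalues) * star UA
          * (UA * diagonal (Real.sqrt ∘ hApsd.1.eigenvalues) * star UA)
        = UA * (diagonal (Real.sqrt ∘ hApsd.1.eigenvalues) * (star UA * UA)
          * diagonal (Real.sqrt ∘ hApsd.1.eigenvalues)) * star UA := by
          simp only [Matrix.mul_assoc]
      _ = UA * diagonal hApsd.1.eigenvalues * star UA := by
          rw [hUA', Matrix.mul_one, diagonal_mul_diagonal]
          congr 3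
          funext i
          exact Real.mul_self_sqrt (hApsd.eigenvalues_nonneg i)
      _ = A := hAspec.symm
  have hSH : Sᴴ = S := by
    rw [hSdef]
    simp [Matrix.conjTranspose_mul, Matrix.mul_assoc, Matrix.star_eq_conjTranspose,
      Matrix.conjTranspose_eq_transpose_of_trivial]
  clear_value S
  have hdetS : S.det * S.det = A.det := by rw [← det_mul, hSS]
  have hdetS0 : S.det ≠ 0 := by
    intro h
    rw [h, mul_zero] at hdetS
    exact absurd hdetS.symm (ne_of_gt hA.det_pos)
  have hSinv : S * S⁻¹ = 1 := mul_nonsing_inv _ (isUnit_iff_ne_zero.mpr hdetS0)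
  have hSinv' : S⁻¹ * S = 1 := nonsing_inv_mul _ (isUnit_iff_ne_zero.mpr hdetS0)
  have hSiH : (S⁻¹)ᴴ = S⁻¹ := by rw [conjTranspose_nonsing_inv, hSH]
  set M : Matrix (Fin n) (Fin n) ℝ := S⁻¹ * B * S⁻¹ with hMdef
  -- M - 1 is PSD
  have hM1 : (M - 1).PosSemidef := by
    have h := hAB.mul_mul_conjTranspose_same S⁻¹
    rw [hSiH] at h
    have hA1 : S⁻¹ * A * S⁻¹ = 1 := by
      rw [← hSS, ← Matrix.mul_assoc, hSinv', Matrix.one_mul, hSinv]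
    have : S⁻¹ * (B - A) * S⁻¹ = M - 1 := by
      rw [Matrix.mul_sub, Matrix.sub_mul, hA1, hMdef]
    rwa [this] at h
  have hM : M.IsHermitian := by
    have h1 := hM1.1.add (Matrix.isHermitian_one (n := Fin n) (α := ℝ))
    simpa using h1
  -- determinant of M
  have hdetSi : S.det * S⁻¹.det = 1 := by rw [← det_mul, hSinv, det_one]
  have hdetM : M.det * A.det = B.det := by
    have h1 : M.det = S⁻¹.det * B.det * S⁻¹.det := by rw [hMdef, det_mul, det_mul]
    rw [h1, ← hdetS]
    have hr : S⁻¹.det * B.det * S⁻¹.det * (S.det * S.det)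
        = B.det * (S.det * S⁻¹.det) * (S.det * S⁻¹.det) := by ring
    rw [hr, hdetSi, mul_one, mul_one]
  have hMdetle : M.det ≤ θ := by
    have := hdetM.le.trans hdet
    exact le_of_mul_le_mul_right this hA.det_pos
  -- eigenvalues
  have hone : ∀ i, 1 ≤ hM.eigenvalues i := one_le_eigen hM hM1
  have hprod : ∏ i, hM.eigenvalues i ≤ θ := by
    have := hM.det_eq_prod_eigenvalues
    simp only [RCLike.ofReal_real_eq_id, id_eq, Function.comp] at this
    rw [← this]
    exact hMdetle
  have hub : ∀ i, hM.eigenvalues i ≤ θ := by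
    intro j
    have h1 : (1:ℝ) ≤ ∏ i ∈ Finset.univ.erase j, hM.eigenvalues i := by
      have := Finset.prod_le_prod (s := Finset.univ.erase j) (f := fun _ => (1:ℝ))
        (g := hM.eigenvalues) (fun i _ => zero_le_one) (fun i _ => hone i)
      simpa using this
    have h2 : hM.eigenvalues j * ∏ i ∈ Finset.univ.erase j, hM.eigenvalues i
        = ∏ i, hM.eigenvalues i := Finset.mul_prod_erase _ _ (Finset.mem_univ j)
    nlinarith [hone j]
  -- spectral setup
  set U : Matrix (Fin n) (Fin n) ℝ := (hM.eigenvectorUnitary : Matrix (Fin n) (Fin n) ℝ)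
    with hUdef
  have hU : U * star U = 1 := (mem_unitaryGroup_iff).mp hM.eigenvectorUnitary.2
  have hU' : star U * U = 1 := (mem_unitaryGroup_iff').mp hM.eigenvectorUnitary.2
  have hspec : M = U * diagonal hM.eigenvalues * star U := by
    have := hM.spectral_theorem
    simpa using this
  -- θ•1 - M is PSD
  have hNpsd : (θ • (1 : Matrix (Fin n) (Fin n) ℝ) - M).PosSemidef := by
    rw [hspec, conj_sub_diag U hU]
    have hs : star U = Uᴴ := rfl
    rw [hs]
    exact (posSemidef_diagonal_iff.mpr fun i => by simpa using hub i).mul_mul_conjTranspose_same U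
  -- part 1
  have hpart1 : (θ • A - B).PosSemidef := by
    have h := hNpsd.mul_mul_conjTranspose_same S
    rw [hSH] at h
    have heq : S * (θ • (1 : Matrix (Fin n) (Fin n) ℝ) - M) * S = θ • A - B := by
      rw [Matrix.mul_sub, Matrix.sub_mul, Matrix.mul_smul, Matrix.mul_one, Matrix.smul_mul, hSS,
        hMdef, ← Matrix.mul_assoc, ← Matrix.mul_assoc, hSinv, Matrix.one_mul, Matrix.mul_assoc,
        hSinv', Matrix.mul_one]
    rwa [heq] at h
  refine ⟨hpart1, ?_⟩
  -- part 2
  rw [hmsqrt]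
  have hθ0 : (0:ℝ) ≤ θ := le_trans zero_le_one hθ
  have hMM : M * M = U * diagonal (fun i => hM.eigenvalues i * hM.eigenvalues i) * star U := by
    conv_lhs => rw [hspec]
    rw [← diagonal_mul_diagonal]
    calc U * diagonal hM.eigenvalues * star U * (U * diagonal hM.eigenvalues * star U)
        = U * diagonal hM.eigenvalues * (star U * U) * diagonal hM.eigenvalues * star U := by
          simp only [Matrix.mul_assoc]
      _ = U * (diagonal hM.eigenvalues * diagonal hM.eigenvalues) * star U := by
          rw [hU']; simp only [Matrix.mul_one, Matrix.mul_assoc]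
  have hP : ((θ^2) • (1 : Matrix (Fin n) (Fin n) ℝ) - M * M).PosSemidef := by
    rw [hMM, conj_sub_diag U hU]
    have hs : star U = Uᴴ := rfl
    rw [hs]
    refine (posSemidef_diagonal_iff.mpr fun i => ?_).mul_mul_conjTranspose_same U
    have h1 := hone i
    have h2 := hub i
    nlinarith
  -- operator norm bound
  rw [spec]
  refine ContinuousLinearMap.opNorm_le_bound _ hθ0 fun x => ?_
  set x' : Fin n → ℝ := (WithLp.equiv 2 (Fin n → ℝ)) x with hx'
  set y : Fin n → ℝ := M *ᵥ x' with hy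
  have hquad := hP.dotProduct_mulVec_nonneg x'
  have hexp : star x' ⬝ᵥ (((θ^2) • (1 : Matrix (Fin n) (Fin n) ℝ) - M * M) *ᵥ x')
      = θ^2 * (x' ⬝ᵥ x') - x' ⬝ᵥ ((M * M) *ᵥ x') := by
    rw [sub_mulVec, smul_mulVec, one_mulVec]
    simp [dotProduct_sub, dotProduct_smul, smul_eq_mul]
  rw [hexp] at hquad
  have hMt : Mᵀ = M := hM.eq
  have hyy : x' ⬝ᵥ ((M * M) *ᵥ x') = y ⬝ᵥ y := by
    rw [← mulVec_mulVec, dotProduct_mulVec, ← hy]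
    congr 1
    rw [← mulVec_transpose, hMt, ← hy]
  rw [hyy] at hquad
  have hxx : x' ⬝ᵥ x' = ∑ i, (x' i)^2 := by simp [dotProduct, sq]
  have hyy2 : y ⬝ᵥ y = ∑ i, (y i)^2 := by simp [dotProduct, sq]
  have hnormx : ‖x‖ = Real.sqrt (∑ i, (x' i)^2) := by
    rw [EuclideanSpace.norm_eq]
    congr 1
    exact Finset.sum_congr rfl fun i _ => by rw [Real.norm_eq_abs, sq_abs]; rfl
  have happ : ‖(LinearMap.toContinuousLinearMap (Matrix.toEuclideanLin M)) x‖
      = Real.sqrt (∑ i, (y i)^2) := by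
    rw [LinearMap.coe_toContinuousLinearMap']
    rw [Matrix.toEuclideanLin_apply]
    rw [EuclideanSpace.norm_eq]
    congr 1
    exact Finset.sum_congr rfl fun i _ => by rw [Real.norm_eq_abs, sq_abs]; rfl
  rw [happ, hnormx]
  have hle : ∑ i, (y i)^2 ≤ θ^2 * ∑ i, (x' i)^2 := by
    rw [← hxx, ← hyy2]; linarith
  calc Real.sqrt (∑ i, (y i)^2) ≤ Real.sqrt (θ^2 * ∑ i, (x' i)^2) := Real.sqrt_le_sqrt hle
    _ = θ * Real.sqrt (∑ i, (x' i)^2) := by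
        rw [Real.sqrt_mul (sq_nonneg θ), Real.sqrt_sq hθ0]
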